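/- Define f(P) = Q(√D (ln(1+gP) − R_c ln 2)) for P ≥ 0, with constants D > 0, g > 0, R_c > 0. Then the second derivative of f at P has the same sign as D(ln(1+gP) − R_c ln 2) + 1; in particular f''(P) ≥ 0 if and only if R_c ≤ log₂(1+gP) + (1/D) log₂ e. -/

import Mathlib

noncomputable def Qfun (x : ℝ) : ℝ :=
  (1 / Real.sqrt (2 * Real.pi)) * ∫ t in Set.Ioi x, Real.exp (-t^2 / 2)

open MeasureTheory Real

lemma phi_integrable : Integrable (fun t : ℝ => Real.exp (-t^2 / 2)) := by
  have h : (fun t : ℝ => Real.exp (-t^2 / 2)) = fun t : ℝ => Real.exp (-(1/2) * t^2) := by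
    funext t; ring_nf
  rw [h]
  exact integrable_exp_neg_mul_sq (by norm_num : (0:ℝ) < 1/2)

lemma phi_cont : Continuous (fun t : ℝ => Real.exp (-t^2 / 2)) := by
  continuity

lemma Qfun_hasDerivAt (x : ℝ) :
    HasDerivAt Qfun (-((1 / Real.sqrt (2 * Real.pi)) * Real.exp (-x^2 / 2))) x := by
  set φ : ℝ → ℝ := fun t => Real.exp (-t^2 / 2) with hφ
  set c : ℝ := 1 / Real.sqrt (2 * Real.pi) with hc
  have hQ : Qfun = fun y => c * (((∫ t, φ t) - ∫ t in Set.Iic (0:ℝ), φ t)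
      - ∫ t in (0:ℝ)..y, φ t) := by
    funext y
    have h1 : (∫ t in Set.Iic y, φ t) + (∫ t in Set.Ioi y, φ t) = ∫ t, φ t :=
      intervalIntegral.integral_Iic_add_Ioi phi_integrable.integrableOn phi_integrable.integrableOn
    have h2 : (∫ t in Set.Iic y, φ t) - ∫ t in Set.Iic (0:ℝ), φ t = ∫ t in (0:ℝ)..y, φ t :=
      intervalIntegral.integral_Iic_sub_Iic phi_integrable.integrableOn phi_integrable.integrableOn
    have : (∫ t in Set.Ioi y, φ t) = ((∫ t, φ t) - ∫ t in Set.Iic (0:ℝ), φ t)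
        - ∫ t in (0:ℝ)..y, φ t := by
      rw [← h2]; linarith
    rw [Qfun, ← hc, ← hφ, this]
  rw [hQ]
  have h3 : HasDerivAt (fun y => ∫ t in (0:ℝ)..y, φ t) (φ x) x :=
    (phi_cont.integral_hasStrictDerivAt 0 x).hasDerivAt
  have := ((h3.const_sub (((∫ t, φ t) - ∫ t in Set.Iic (0:ℝ), φ t))).const_mul c)
  simpa [mul_neg] using this

theorem second_deriv_sign (D g Rc : ℝ) (hD : 0 < D) (hg : 0 < g) (hRc : 0 < Rc) :
    ∀ P : ℝ, 0 ≤ P →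
      (Real.sign (deriv (deriv (fun P' : ℝ =>
          Qfun (Real.sqrt D * (Real.log (1 + g * P') - Rc * Real.log 2)))) P)
        = Real.sign (D * (Real.log (1 + g * P) - Rc * Real.log 2) + 1)) ∧
      (0 ≤ deriv (deriv (fun P' : ℝ =>
          Qfun (Real.sqrt D * (Real.log (1 + g * P') - Rc * Real.log 2)))) P
        ↔ Rc ≤ Real.logb 2 (1 + g * P) + (1 / D) * Real.logb 2 (Real.exp 1)) := by
  intro P hP
  set c : ℝ := 1 / Real.sqrt (2 * Real.pi) with hc
  have hcpos : 0 < c := by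
    rw [hc]
    positivity
  set u : ℝ → ℝ := fun P' => Real.sqrt D * (Real.log (1 + g * P') - Rc * Real.log 2) with hu
  set f : ℝ → ℝ := fun P' => Qfun (u P') with hf
  set F : ℝ → ℝ := fun P' => -(c * Real.exp (-(u P')^2 / 2)) * (Real.sqrt D * (g / (1 + g * P')))
    with hF
  -- first derivative on the set {P' | 0 < 1 + g * P'}
  have hderiv : ∀ P' : ℝ, 0 < 1 + g * P' → HasDerivAt f (F P') P' := by
    intro P' hpos
    have hu' : HasDerivAt u (Real.sqrt D * (g / (1 + g * P'))) P' := by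
      have h1 : HasDerivAt (fun y : ℝ => 1 + g * y) g P' := by
        simpa using ((hasDerivAt_id P').const_mul g).const_add 1
      have h2 : HasDerivAt (fun y : ℝ => Real.log (1 + g * y)) (g / (1 + g * P')) P' :=
        h1.log (ne_of_gt hpos)
      simpa using ((h2.sub_const (Rc * Real.log 2)).const_mul (Real.sqrt D))
    exact (Qfun_hasDerivAt (u P')).comp P' hu'
  have hopen : IsOpen {P' : ℝ | 0 < 1 + g * P'} :=
    isOpen_lt continuous_const (by continuity)
  have hPmem : 0 < 1 + g * P := by nlinarith
  have hmem : {P' : ℝ | 0 < 1 + g * P'} ∈ nhds P := hopen.mem_nhds hPmem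
  have hfd : deriv f =ᶠ[nhds P] F := by
    filter_upwards [hmem] with y hy
    exact (hderiv y hy).deriv
  -- second derivative
  set L : ℝ := Real.log (1 + g * P) - Rc * Real.log 2 with hL
  have hsqD : 0 < Real.sqrt D := Real.sqrt_pos.mpr hD
  have hF' : HasDerivAt F
      (c * Real.exp (-(u P)^2 / 2) * (g / (1 + g * P))^2 * Real.sqrt D * (D * L + 1)) P := by
    have hu' : HasDerivAt u (Real.sqrt D * (g / (1 + g * P))) P := by
      have h1 : HasDerivAt (fun y : ℝ => 1 + g * y) g P := by
        simpa using ((hasDerivAt_id P).const_mul g).const_add 1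
      have h2 : HasDerivAt (fun y : ℝ => Real.log (1 + g * y)) (g / (1 + g * P)) P :=
        h1.log (ne_of_gt hPmem)
      simpa using ((h2.sub_const (Rc * Real.log 2)).const_mul (Real.sqrt D))
    -- derivative of A := fun y => -(c * exp (-(u y)^2/2))
    have hA : HasDerivAt (fun y => -(c * Real.exp (-(u y)^2 / 2)))
        (c * Real.exp (-(u P)^2 / 2) * (u P * (Real.sqrt D * (g / (1 + g * P))))) P := by
      have hsq : HasDerivAt (fun y => -(u y)^2 / 2)
          (-(u P) * (Real.sqrt D * (g / (1 + g * P)))) P := by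
        have := ((hu'.pow 2).neg).div_const 2
        refine this.congr_deriv ?_
        ring_nf
      have := (hsq.exp.const_mul c).neg
      refine this.congr_deriv ?_
      ring
    -- derivative of B := fun y => sqrt D * (g / (1 + g * y))
    have hB : HasDerivAt (fun y => Real.sqrt D * (g / (1 + g * y)))
        (-(Real.sqrt D * (g^2 / (1 + g * P)^2))) P := by
      have h1 : HasDerivAt (fun y : ℝ => 1 + g * y) g P := by
        simpa using ((hasDerivAt_id P).const_mul g).const_add 1
      have h2 := h1.inv (ne_of_gt hPmem)
      have h3 := (h2.const_mul g).const_mul (Real.sqrt D)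
      have hfun : (fun y : ℝ => Real.sqrt D * (g / (1 + g * y)))
          = fun y => Real.sqrt D * (g * (1 + g * y)⁻¹) := by
        funext y; rw [div_eq_mul_inv]
      rw [hfun]
      refine h3.congr_deriv ?_
      ring
    have := hA.mul hB
    rw [hF]
    refine this.congr_deriv ?_
    have huP : u P = Real.sqrt D * L := rfl
    have hD' : Real.sqrt D * Real.sqrt D = D := Real.mul_self_sqrt hD.le
    rw [huP]
    generalize Real.sqrt D = s at hD' ⊢
    rw [← hD']
    have hx : (1 + g * P) ≠ 0 := ne_of_gt hPmem
    field_simp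
  have key : deriv (deriv f) P
      = c * Real.exp (-(u P)^2 / 2) * (g / (1 + g * P))^2 * Real.sqrt D * (D * L + 1) := by
    rw [hfd.deriv_eq]
    exact hF'.deriv
  -- positivity of the constant factor
  set K : ℝ := c * Real.exp (-(u P)^2 / 2) * (g / (1 + g * P))^2 * Real.sqrt D with hK
  have hKpos : 0 < K := by
    rw [hK]
    have := Real.exp_pos (-(u P)^2 / 2)
    positivity
  have hkey : deriv (deriv f) P = K * (D * L + 1) := key
  constructor
  · rw [hkey]
    rcases lt_trichotomy (D * L + 1) 0 with h | h | h
    · rw [Real.sign_of_neg h, Real.sign_of_neg (by nlinarith)]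
    · rw [h, mul_zero]
    · rw [Real.sign_of_pos h, Real.sign_of_pos (by nlinarith)]
  · rw [hkey]
    have hl2 : 0 < Real.log 2 := Real.log_pos (by norm_num)
    have hiff : 0 ≤ K * (D * L + 1) ↔ 0 ≤ D * L + 1 := by
      constructor
      · intro h; nlinarith
      · intro h; positivity
    rw [hiff]
    rw [Real.logb, Real.logb, Real.log_exp, hL]
    have h2 : Real.log (1 + g * P) / Real.log 2 + 1 / D * (1 / Real.log 2) - Rc
        = (D * (Real.log (1 + g * P) - Rc * Real.log 2) + 1) / (D * Real.log 2) := by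
      field_simp
      ring
    constructor
    · intro h
      rw [← sub_nonneg, h2]
      exact div_nonneg h (by positivity)
    · intro h
      rw [← sub_nonneg, h2, le_div_iff₀ (by positivity), zero_mul] at h
      exact h
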